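/- arXiv:2203.04274 — 7 statements merged into one kernel-verified Lean document; each statement's English description precedes it below -/
import Mathlib

section
/- Let d ≥ 1 and let θ ∈ ℝ^d be nonzero, with a⋆ := θ/‖θ‖. For any action a ∈ ℝ^d with ‖a‖ = 1 and ⟨a, θ⟩ ≥ −‖θ‖/2, the instantaneous regret of a satisfies (1/2)·‖P_a^⊥ θ‖²/‖θ‖ ≤ ⟨a⋆ − a, θ⟩ ≤ 3·‖P_a^⊥ θ‖²/‖θ‖. -/
open EuclideanSpace

/-- Projection of `u` onto the span of `v`. -/
noncomputable def projOn {d : ℕ} (v u : EuclideanSpace ℝ (Fin d)) : EuclideanSpace ℝ (Fin d) :=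
  ((inner ℝ u v : ℝ) / ‖v‖ ^ 2) • v

/-- Projection of `u` onto the orthogonal complement of `v`. -/
noncomputable def projPerp {d : ℕ} (v u : EuclideanSpace ℝ (Fin d)) : EuclideanSpace ℝ (Fin d) :=
  u - projOn v u

/-- For a unit-norm action `a` with `⟨a, θ⟩ ≥ -‖θ‖/2`, the instantaneous regret
`⟨a⋆ - a, θ⟩` (with `a⋆ = θ/‖θ‖`) is between `(1/2)·‖P_a^⊥ θ‖²/‖θ‖` and `3·‖P_a^⊥ θ‖²/‖θ‖`. -/
theorem regret_unit_ball {d : ℕ} (hd : 1 ≤ d) (θ a : EuclideanSpace ℝ (Fin d))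
    (hθ : θ ≠ 0) (ha : ‖a‖ = 1) (hcorr : (inner ℝ a θ : ℝ) ≥ -‖θ‖ / 2) :
    (1 / 2) * ‖projPerp a θ‖ ^ 2 / ‖θ‖ ≤ (inner ℝ (‖θ‖⁻¹ • θ - a) θ : ℝ) ∧
      (inner ℝ (‖θ‖⁻¹ • θ - a) θ : ℝ) ≤ 3 * ‖projPerp a θ‖ ^ 2 / ‖θ‖ := by
  set n : ℝ := ‖θ‖ with hn
  set t : ℝ := (inner ℝ a θ : ℝ) with htdef
  have hnpos : 0 < n := norm_pos_iff.mpr hθ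
  have htle : t ≤ n := by
    calc t ≤ ‖a‖ * ‖θ‖ := real_inner_le_norm a θ
    _ = n := by rw [ha, one_mul]
  -- projPerp a θ = θ - t • a
  have hproj : projPerp a θ = θ - t • a := by
    simp [projPerp, projOn, ha, real_inner_comm θ a, htdef]
  have hperp : ‖projPerp a θ‖ ^ 2 = n ^ 2 - t ^ 2 := by
    rw [hproj, @norm_sub_sq_real, real_inner_smul_right, norm_smul, ha]
    have hc : (inner ℝ θ a : ℝ) = t := by rw [htdef, real_inner_comm]
    rw [mul_one, Real.norm_eq_abs, sq_abs, hc, ← hn]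
    ring
  have hinner : (inner ℝ (‖θ‖⁻¹ • θ - a) θ : ℝ) = n - t := by
    rw [inner_sub_left, real_inner_smul_left, real_inner_self_eq_norm_sq]
    rw [← hn, ← htdef]
    field_simp
  rw [hinner, hperp]
  constructor
  · rw [div_le_iff₀ hnpos]
    nlinarith [sq_nonneg (n - t)]
  · rw [le_div_iff₀ hnpos]
    nlinarith [sq_nonneg (n - t), hcorr]
end

section
/- Let θ ∈ ℝ^d, let h ∈ ℝ^d be a hint with ‖h‖ = 1, and let p ∈ ℝ^d be an orthogonal perturbation of h, i.e. ⟨p, h⟩ = 0, with ‖p‖ < 1/8. Then the regret of the perturbed action a := Perturb(h, p) = (h + p)/√(1 + ‖p‖²) with respect to the hint h is bounded as ⟨h − a, θ⟩ ≤ ‖θ‖·‖p‖² + |⟨p, P_h^⊥ θ⟩|. -/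
/-- The perturbed action `(h + p)/√(1 + ‖p‖²)`. -/
noncomputable def perturb {d : ℕ} (h p : EuclideanSpace ℝ (Fin d)) : EuclideanSpace ℝ (Fin d) :=
  (Real.sqrt (1 + ‖p‖ ^ 2))⁻¹ • (h + p)

/-- hint-based regret of the perturbed action is at most
`‖θ‖·‖p‖² + |⟨p, P_h^⊥ θ⟩|`. -/
theorem hint_regret_perturb {d : ℕ} (hd : 1 ≤ d) (θ h p : EuclideanSpace ℝ (Fin d))
    (hh : ‖h‖ = 1) (hph : (inner ℝ p h : ℝ) = 0) (hpn : ‖p‖ < 1 / 8) :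
    (inner ℝ (h - perturb h p) θ : ℝ) ≤ ‖θ‖ * ‖p‖ ^ 2 + |(inner ℝ p (projPerp h θ) : ℝ)| := by
  set t := ‖p‖ ^ 2 with ht
  have ht0 : 0 ≤ t := sq_nonneg _
  have hs1 : (1:ℝ) ≤ Real.sqrt (1 + t) := by
    have := Real.sqrt_le_sqrt (show (1:ℝ) ≤ 1 + t by linarith)
    simpa using this
  set s := Real.sqrt (1 + t) with hsdef
  have hs0 : (0:ℝ) < s := lt_of_lt_of_le one_pos hs1
  have hsq : s ^ 2 = 1 + t := Real.sq_sqrt (by linarith)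
  have hp0 : (inner ℝ p (projOn h θ) : ℝ) = 0 := by
    rw [projOn, real_inner_smul_right, hph, mul_zero]
  have hpθ : (inner ℝ p (projPerp h θ) : ℝ) = (inner ℝ p θ : ℝ) := by
    rw [projPerp, inner_sub_right, hp0, sub_zero]
  have hinner1 : (inner ℝ (h - perturb h p) θ : ℝ)
      = (1 - s⁻¹) * (inner ℝ h θ : ℝ) - s⁻¹ * (inner ℝ p θ : ℝ) := by
    simp only [perturb, inner_sub_left, inner_add_left, real_inner_smul_left, ← ht, ← hsdef]
    ring
  rw [hpθ, hinner1]
  set A := (inner ℝ h θ : ℝ)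
  set B := (inner ℝ p θ : ℝ)
  have hA : |A| ≤ ‖θ‖ := by
    have := abs_real_inner_le_norm h θ
    simpa [hh] using this
  have hA1 : A ≤ ‖θ‖ := (abs_le.mp hA).2
  have hA2 : -‖θ‖ ≤ A := (abs_le.mp hA).1
  have hB1 : -B ≤ |B| := neg_le_abs B
  have hB0 : 0 ≤ |B| := abs_nonneg B
  have hinv1 : s⁻¹ ≤ 1 := by
    rw [inv_le_one_iff₀]; right; exact hs1
  have hinv0 : 0 < s⁻¹ := inv_pos.mpr hs0
  have h1 : 1 - s⁻¹ ≤ t := by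
    have hsinv : s * s⁻¹ = 1 := mul_inv_cancel₀ (ne_of_gt hs0)
    nlinarith [mul_pos hs0 hinv0]
  have hθ0 : 0 ≤ ‖θ‖ := norm_nonneg θ
  nlinarith [mul_nonneg ht0 hθ0, mul_le_mul_of_nonneg_left hB1 (le_of_lt hinv0)]
end

section
/- Let θ ∈ ℝ^d be nonzero with optimal action a⋆ := θ/‖θ‖, let h ∈ ℝ^d be a hint with ‖h‖ = 1 and ⟨h, θ⟩ ≥ −‖θ‖/4, and let p ∈ ℝ^d be an orthogonal perturbation of h, i.e. ⟨p, h⟩ = 0, with ‖p‖ < 1/8. Then the instantaneous regret of the perturbed action a := Perturb(h, p) = (h + p)/√(1 + ‖p‖²) is bounded as ⟨a⋆ − a, θ⟩ ≤ 12·‖P_h^⊥ θ‖²/‖θ‖ + 3·‖θ‖·‖p‖². -/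
set_option maxHeartbeats 800000 in
lemma regret_arith (t s c q W r : ℝ) (ht : 0 < t) (hs0 : 0 ≤ s) (hpn : s < 1 / 8)
    (hcorr : -t / 4 ≤ c) (hW0 : 0 ≤ W) (hW2 : c ^ 2 + W ^ 2 = t ^ 2) (hq : |q| ≤ s * W)
    (hr0 : 0 < r) (hr1 : r ≤ 1) (hr2 : 1 - r ≤ s ^ 2 / 2) :
    (t - r * (c + q)) * t ≤ 12 * W ^ 2 + 3 * t * s ^ 2 * t := by
  have h1 : -q ≤ s * W := by cases abs_le.mp hq with | intro a b => linarith
  have hqr : -(r * q) ≤ s * W := by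
    nlinarith [mul_le_mul_of_nonneg_left h1 hr0.le,
      mul_nonneg (sub_nonneg.mpr hr1) (mul_nonneg hs0 hW0)]
  have hswt : s * W * t ≤ (W ^ 2 + s ^ 2 * t ^ 2) / 2 := by nlinarith [sq_nonneg (W - s * t)]
  have hqrt : -(r * q) * t ≤ s * W * t := mul_le_mul_of_nonneg_right hqr ht.le
  have hst2 : (0:ℝ) ≤ s ^ 2 * t ^ 2 := by positivity
  rcases le_or_gt 0 c with hc | hc
  · have hct : c ≤ t := by nlinarith
    have h2 : t * t - c * t ≤ W ^ 2 := by nlinarith [mul_nonneg (sub_nonneg.mpr hct) hc]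
    have h3 : (1 - r) * (c * t) ≤ s ^ 2 / 2 * (t ^ 2) := by
      have ha := mul_le_mul_of_nonneg_right hr2 (mul_nonneg hc ht.le)
      have hb : c * t ≤ t ^ 2 := by nlinarith
      have hcn : (0:ℝ) ≤ s ^ 2 / 2 := by positivity
      nlinarith [mul_le_mul_of_nonneg_left hb hcn]
    nlinarith [sq_nonneg W]
  · have hcc : c ^ 2 ≤ t ^ 2 / 16 := by
      nlinarith [mul_nonneg (by linarith : (0:ℝ) ≤ t / 4 - c) (by linarith : (0:ℝ) ≤ t / 4 + c)]
    have hWt : W ≤ t := by nlinarith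
    have hrc : -(r * c) * t ≤ t / 4 * t := by
      have ha : r * (-c) ≤ r * (t / 4) := mul_le_mul_of_nonneg_left (by linarith) hr0.le
      have hb : r * (t / 4) ≤ t / 4 := by nlinarith
      nlinarith
    have hswt2 : s * W * t ≤ t * t / 8 := by
      have ha : s * W ≤ 1 / 8 * t := by nlinarith
      nlinarith
    have hW2' : 15 / 16 * t ^ 2 ≤ W ^ 2 := by nlinarith
    nlinarith

/-- the instantaneous regret of the perturbed action satisfies
`⟨a⋆ - a, θ⟩ ≤ 12·‖P_h^⊥ θ‖²/‖θ‖ + 3·‖θ‖·‖p‖²`. -/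
theorem regret_perturb {d : ℕ} (hd : 1 ≤ d) (θ h p : EuclideanSpace ℝ (Fin d))
    (hθ : θ ≠ 0) (hh : ‖h‖ = 1) (hcorr : (inner ℝ h θ : ℝ) ≥ -‖θ‖ / 4)
    (hph : (inner ℝ p h : ℝ) = 0) (hpn : ‖p‖ < 1 / 8) :
    (inner ℝ (‖θ‖⁻¹ • θ - perturb h p) θ : ℝ) ≤
      12 * ‖projPerp h θ‖ ^ 2 / ‖θ‖ + 3 * ‖θ‖ * ‖p‖ ^ 2 := by
  have ht : (0:ℝ) < ‖θ‖ := norm_pos_iff.mpr hθ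
  set t : ℝ := ‖θ‖ with htdef
  set s : ℝ := ‖p‖ with hsdef
  have hs0 : (0:ℝ) ≤ s := norm_nonneg p
  set c : ℝ := (inner ℝ h θ : ℝ) with hcdef
  set q : ℝ := (inner ℝ p θ : ℝ) with hqdef
  set W : ℝ := ‖projPerp h θ‖ with hWdef
  have hW0 : 0 ≤ W := norm_nonneg _
  have hproj : projPerp h θ = θ - c • h := by
    simp [projPerp, projOn, hh, real_inner_comm θ h, hcdef]
  have hcomm : (inner ℝ θ h : ℝ) = c := (real_inner_comm θ h).symm
  have hW2 : c ^ 2 + W ^ 2 = t ^ 2 := by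
    have h1 : W ^ 2 = ‖θ - c • h‖ ^ 2 := by rw [hWdef, hproj]
    rw [norm_sub_sq_real, real_inner_smul_right, hcomm, norm_smul, hh] at h1
    simp only [Real.norm_eq_abs, mul_one] at h1
    nlinarith [sq_abs c]
  have hq : |q| ≤ s * W := by
    have h1 : (inner ℝ p (projPerp h θ) : ℝ) = q := by
      rw [hproj, inner_sub_right, real_inner_smul_right, hph]
      simp [hqdef]
    calc |q| = |(inner ℝ p (projPerp h θ) : ℝ)| := by rw [h1]
      _ ≤ s * W := abs_real_inner_le_norm p _
  set R : ℝ := Real.sqrt (1 + s ^ 2) with hRdef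
  have hR1 : 1 ≤ R := Real.one_le_sqrt.mpr (by nlinarith)
  have hR2 : R ≤ 1 + s ^ 2 / 2 := by
    rw [hRdef, show (1 : ℝ) + s ^ 2 / 2 = Real.sqrt ((1 + s ^ 2 / 2) ^ 2) from
      (Real.sqrt_sq (by positivity)).symm]
    exact Real.sqrt_le_sqrt (by nlinarith)
  set r : ℝ := R⁻¹ with hrdef
  have hr0 : 0 < r := by positivity
  have hrR : r * R = 1 := inv_mul_cancel₀ (by linarith)
  have hr1 : r ≤ 1 := by nlinarith
  have hr2 : 1 - r ≤ s ^ 2 / 2 := by nlinarith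
  have hLHS : (inner ℝ (‖θ‖⁻¹ • θ - perturb h p) θ : ℝ) = t - r * (c + q) := by
    simp only [perturb, inner_sub_left, inner_add_left, real_inner_smul_left,
      real_inner_self_eq_norm_sq, ← htdef, ← hsdef, ← hcdef, ← hqdef, ← hRdef, ← hrdef,
      RCLike.conj_to_real]
    field_simp
  rw [hLHS, div_add' _ _ _ ht.ne', le_div_iff₀ ht]
  exact regret_arith t s c q W r ht hs0 hpn hcorr hW0 hW2 hq hr0 hr1 hr2
end

section
/- Let h ∈ ℝ^d with ‖h‖ = 1, let 0 < Δ ≤ 1/4, and let θ ∈ ℝ^d satisfy ‖θ − h/2‖ ≤ Δ. Then θ ≠ 0 and the instantaneous regret of the hint h with respect to the optimal action a⋆ := θ/‖θ‖ satisfies ⟨θ, a⋆ − h⟩ ≤ 972·Δ². -/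
/-- If `‖h‖ = 1`, `0 < Δ ≤ 1/4` and `‖θ - h/2‖ ≤ Δ`, then `θ ≠ 0` and the
instantaneous regret of the hint satisfies `⟨θ, a⋆ - h⟩ ≤ 972·Δ²` where `a⋆ = θ/‖θ‖`. -/
theorem hint_regret_small {d : ℕ} (hd : 1 ≤ d)
    (θ h : EuclideanSpace ℝ (Fin d)) (hh : ‖h‖ = 1)
    (Δ : ℝ) (hΔ0 : 0 < Δ) (hΔ4 : Δ ≤ 1 / 4)
    (hclose : ‖θ - (1 / 2 : ℝ) • h‖ ≤ Δ) :
    θ ≠ 0 ∧ (inner ℝ θ (‖θ‖⁻¹ • θ - h) : ℝ) ≤ 972 * Δ ^ 2 := by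
  set s : ℝ := ‖θ‖ with hs
  set t : ℝ := (inner ℝ θ h : ℝ) with ht
  -- expansion of the squared distance
  have hexp : ‖θ - (1 / 2 : ℝ) • h‖ ^ 2 = s ^ 2 - t + 1 / 4 := by
    rw [norm_sub_sq_real, real_inner_smul_right, norm_smul]
    simp [hh, ht]
    ring
  have hsq : s ^ 2 - t + 1 / 4 ≤ Δ ^ 2 := by
    rw [← hexp]
    have h0 : (0:ℝ) ≤ ‖θ - (1 / 2 : ℝ) • h‖ := norm_nonneg _
    nlinarith
  -- Cauchy-Schwarz: t ≤ s
  have hts : t ≤ s := by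
    have := real_inner_le_norm θ h
    simpa [hh, ht, hs] using this
  -- lower bound on t
  have htlow : 1 / 2 - Δ ≤ t := by
    have h1 : (inner ℝ (θ - (1 / 2 : ℝ) • h) h : ℝ) = t - 1 / 2 := by
      rw [inner_sub_left, real_inner_smul_left, real_inner_self_eq_norm_sq, hh]
      ring
    have h2 : |(inner ℝ (θ - (1 / 2 : ℝ) • h) h : ℝ)| ≤ Δ := by
      calc |(inner ℝ (θ - (1 / 2 : ℝ) • h) h : ℝ)| ≤ ‖θ - (1 / 2 : ℝ) • h‖ * ‖h‖ :=
            abs_real_inner_le_norm _ _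
        _ ≤ Δ := by rw [hh]; simpa using hclose
    have := abs_le.mp h2
    linarith [this.1, h1 ▸ this.1]
  have htpos : (0:ℝ) < t := by linarith
  have hspos : (0:ℝ) < s := lt_of_lt_of_le htpos hts
  have hθne : θ ≠ 0 := by
    intro h0
    rw [h0] at hs
    simp at hs
    linarith [hs ▸ hspos]
  refine ⟨hθne, ?_⟩
  have hgoal : (inner ℝ θ (‖θ‖⁻¹ • θ - h) : ℝ) = s - t := by
    rw [inner_sub_right, real_inner_smul_right, real_inner_self_eq_norm_sq, ← hs, ← ht]
    field_simp
  rw [hgoal]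
  nlinarith [sq_nonneg (t - 1/2), sq_nonneg Δ]
end

section
/- Let d ≥ 1 and let G = (G_1, …, G_d) be a random vector with independent coordinates, each Gaussian with mean 0 and variance 1/d. For every δ ∈ (0, 1), the probability that ‖G‖² = Σ_{i=1}^d G_i² exceeds 1 + 2√(ln(1/δ)/d) + 2·ln(1/δ)/d is at most δ. -/
open MeasureTheory ProbabilityTheory Real
open scoped NNReal ENNReal


lemma two_log_le_sub_inv {r : ℝ} (hr : 1 ≤ r) : 2 * Real.log r ≤ r - r⁻¹ := by
  have hmono : MonotoneOn (fun z : ℝ => z - z⁻¹ - 2 * Real.log z) (Set.Ici 1) := by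
    have hderiv : ∀ z ∈ interior (Set.Ici (1:ℝ)),
        HasDerivAt (fun z : ℝ => z - z⁻¹ - 2 * Real.log z) (1 - (-(z^2)⁻¹) - 2 * z⁻¹) z := by
      intro z hz
      rw [interior_Ici] at hz
      have hz0 : z ≠ 0 := by have : (1:ℝ) < z := hz; linarith
      exact ((hasDerivAt_id z).sub (hasDerivAt_inv hz0)).sub
        ((Real.hasDerivAt_log hz0).const_mul 2)
    apply monotoneOn_of_deriv_nonneg (convex_Ici 1)
    · apply ContinuousOn.sub
      apply ContinuousOn.sub continuousOn_id
      · exact continuousOn_inv₀.mono (fun z hz => by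
          simp only [Set.mem_compl_iff, Set.mem_singleton_iff]
          have : (1:ℝ) ≤ z := hz; intro h; simp [h] at this; linarith)
      · exact (continuousOn_const.mul (Real.continuousOn_log.mono (fun z hz => by
          simp only [Set.mem_compl_iff, Set.mem_singleton_iff]
          have : (1:ℝ) ≤ z := hz; intro h; simp [h] at this; linarith)))
    · intro z hz
      exact (hderiv z hz).differentiableAt.differentiableWithinAt
    · intro z hz
      rw [(hderiv z hz).deriv]
      rw [interior_Ici] at hz
      have hz1 : (1:ℝ) < z := hz
      have hz0 : (0:ℝ) < z := by linarith
      have h1 : (0:ℝ) < z^2 := by positivity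
      have heq : 1 - -(z^2)⁻¹ - 2 * z⁻¹ = (1 - z⁻¹)^2 := by
        field_simp
        ring
      rw [heq]
      positivity
  have h1 := hmono (Set.self_mem_Ici) (Set.mem_Ici.mpr hr) hr
  simp only [inv_one, Real.log_one] at h1
  linarith

lemma log_le_key {y : ℝ} (hy : 0 ≤ y) : Real.log (1 + y) ≤ y * (2 + y) / (2 * (1 + y)) := by
  have h1y : (0:ℝ) < 1 + y := by linarith
  have hr : 1 ≤ Real.sqrt (1 + y) := by
    have := Real.sqrt_le_sqrt (show (1:ℝ) ≤ 1 + y by linarith)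
    simpa using this
  have hrpos : 0 < Real.sqrt (1 + y) := by linarith
  have h2 := two_log_le_sub_inv hr
  rw [Real.log_sqrt h1y.le] at h2
  have h3 : Real.log (1 + y) ≤ Real.sqrt (1+y) - (Real.sqrt (1+y))⁻¹ := by linarith
  have hsq : Real.sqrt (1+y) ^ 2 = 1 + y := Real.sq_sqrt h1y.le
  have h4 : Real.sqrt (1+y) - (Real.sqrt (1+y))⁻¹ = y / Real.sqrt (1+y) := by
    rw [eq_div_iff hrpos.ne']
    have := inv_mul_cancel₀ hrpos.ne'
    nlinarith [hsq]
  rw [h4] at h3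
  refine h3.trans ?_
  rw [div_le_div_iff₀ hrpos (by positivity)]
  have h5 : 2 * Real.sqrt (1+y) ≤ 2 + y := by
    nlinarith [hsq, Real.sqrt_nonneg (1+y)]
  have h6 : 2*(1+y) ≤ (2+y) * Real.sqrt (1+y) := by
    nlinarith [mul_le_mul_of_nonneg_right h5 (Real.sqrt_nonneg (1+y)), hsq]
  nlinarith [mul_le_mul_of_nonneg_left h6 hy]

lemma gaussian_sq_exp (v : ℝ≥0) (hv : v ≠ 0) (t : ℝ) (ht : 2 * t * v < 1) :
    Integrable (fun y : ℝ => Real.exp (t * y ^ 2)) (gaussianReal 0 v) ∧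
    ∫ y : ℝ, Real.exp (t * y ^ 2) ∂(gaussianReal 0 v)
      = (Real.sqrt (1 - 2 * t * v))⁻¹ := by
  have hvR : (0:ℝ) < v := by positivity
  have h2v : (0:ℝ) < 2 * v := by linarith
  have hb : 0 < (2 * (v:ℝ))⁻¹ - t := by
    rw [sub_pos, ← one_div, lt_div_iff₀ h2v]
    calc t * (2 * v) = 2 * t * v := by ring
    _ < 1 := ht
  set b : ℝ := (2 * (v:ℝ))⁻¹ - t with hb_def
  have hpt : ∀ y : ℝ, Real.exp (t * y ^ 2) * gaussianPDFReal 0 v y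
      = (Real.sqrt (2 * π * v))⁻¹ * Real.exp (-b * y ^ 2) := by
    intro y
    rw [gaussianPDFReal]
    rw [mul_comm, mul_assoc, ← Real.exp_add]
    congr 1
    rw [hb_def]
    field_simp
    ring
  have hI : Integrable (fun y : ℝ => (Real.sqrt (2 * π * v))⁻¹ * Real.exp (-b * y ^ 2)) :=
    (integrable_exp_neg_mul_sq hb).const_mul _
  rw [gaussianReal_of_var_ne_zero 0 hv]
  constructor
  · rw [integrable_withDensity_iff (measurable_gaussianPDF 0 v)
      (ae_of_all _ fun x => ENNReal.ofReal_lt_top)]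
    refine hI.congr (ae_of_all _ fun y => ?_)
    show (Real.sqrt (2 * π * v))⁻¹ * Real.exp (-b * y ^ 2)
      = Real.exp (t * y ^ 2) * (ENNReal.ofReal (gaussianPDFReal 0 v y)).toReal
    rw [ENNReal.toReal_ofReal (gaussianPDFReal_nonneg 0 v y)]
    exact (hpt y).symm
  · have hden : (volume : Measure ℝ).withDensity (gaussianPDF 0 v)
        = volume.withDensity (fun x => ((gaussianPDFReal 0 v x).toNNReal : ℝ≥0∞)) := rfl
    rw [hden, integral_withDensity_eq_integral_smul
      ((measurable_gaussianPDFReal 0 v).real_toNNReal) (fun y => Real.exp (t * y ^ 2))]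
    have : ∀ y : ℝ, (gaussianPDFReal 0 v y).toNNReal • Real.exp (t * y ^ 2)
        = (Real.sqrt (2 * π * v))⁻¹ * Real.exp (-b * y ^ 2) := by
      intro y
      rw [NNReal.smul_def, smul_eq_mul, Real.coe_toNNReal _ (gaussianPDFReal_nonneg 0 v y),
        mul_comm]
      exact hpt y
    simp_rw [this]
    rw [integral_const_mul, integral_gaussian]
    have h1 : 1 - 2 * t * v = 2 * v * b := by
      rw [hb_def]; field_simp
    have h2πv : (0:ℝ) < 2 * π * v := by positivity
    have hs2πv : (0:ℝ) < Real.sqrt (2 * π * v) := Real.sqrt_pos.mpr h2πv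
    have h2 : Real.sqrt (π / b) = Real.sqrt (2 * π * v) / Real.sqrt (2 * v * b) := by
      rw [← Real.sqrt_div h2πv.le]
      congr 1
      field_simp
    rw [h1, h2]
    have hs2vb : (0:ℝ) < Real.sqrt (2 * v * b) := Real.sqrt_pos.mpr (by positivity)
    field_simp

/-- The law of a random vector in ℝ^d with independent Gaussian coordinates of mean 0 and
variance 1/d (an isotropic Gaussian N(0, I_d/d)). -/
noncomputable def isoGaussian (d : ℕ) : Measure (Fin d → ℝ) :=
  Measure.pi fun _ : Fin d => gaussianReal 0 (d : NNReal)⁻¹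

/-- upper chi-square tail bound: the probability that `‖G‖²` exceeds
`1 + 2√(ln(1/δ)/d) + 2·ln(1/δ)/d` is at most `δ`. -/
theorem gaussian_norm_upper_tail (d : ℕ) (hd : 1 ≤ d) (δ : ℝ) (hδ0 : 0 < δ) (hδ1 : δ < 1) :
    isoGaussian d
      {x | 1 + 2 * Real.sqrt (Real.log (1 / δ) / d) + 2 * Real.log (1 / δ) / d
        < ∑ i, x i ^ 2} ≤ ENNReal.ofReal δ := by
  have hdR : (0:ℝ) < d := by exact_mod_cast Nat.lt_of_lt_of_le Nat.zero_lt_one hd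
  set L := Real.log (1 / δ) with hL_def
  have hL : 0 < L := Real.log_pos (by rw [lt_div_iff₀ hδ0]; linarith)
  set w := Real.sqrt (L / d) with hw_def
  have hw : 0 < w := Real.sqrt_pos.mpr (by positivity)
  have hw2 : w ^ 2 = L / d := Real.sq_sqrt (by positivity)
  have hLw : L = d * w ^ 2 := by rw [hw2]; field_simp
  have h12w : (0:ℝ) < 1 + 2 * w := by linarith
  set s := w / (1 + 2 * w) with hs_def
  have hs0 : 0 < s := div_pos hw h12w
  have hs2 : 2 * s < 1 := by
    rw [hs_def, show (2:ℝ) * (w / (1 + 2 * w)) = 2 * w / (1 + 2 * w) by ring,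
      div_lt_one h12w]
    linarith
  set t := (d : ℝ) * s with ht_def
  have ht0 : 0 < t := mul_pos hdR hs0
  set v : ℝ≥0 := (d : ℝ≥0)⁻¹ with hv_def
  have hdnn : (d : ℝ≥0) ≠ 0 := by
    simp only [ne_eq, Nat.cast_eq_zero]
    omega
  have hv : v ≠ 0 := by simp [hv_def, hdnn]
  have hvR : (v : ℝ) = (d : ℝ)⁻¹ := by
    rw [hv_def, NNReal.coe_inv, NNReal.coe_natCast]
  have h2tv : 2 * t * (v : ℝ) = 2 * s := by
    rw [hvR, ht_def]; field_simp
  have htv : 2 * t * (v : ℝ) < 1 := by rw [h2tv]; exact hs2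
  obtain ⟨hint1, hI1⟩ := gaussian_sq_exp v hv t htv
  -- set up the product measure as a volume
  letI : MeasureSpace ℝ := ⟨gaussianReal 0 v⟩
  haveI : IsProbabilityMeasure (volume : Measure ℝ) := by
    show IsProbabilityMeasure (gaussianReal 0 v); infer_instance
  haveI : SigmaFinite (volume : Measure ℝ) := by
    show SigmaFinite (gaussianReal 0 v); infer_instance
  have hμ : isoGaussian d = (volume : Measure (Fin d → ℝ)) := rfl
  haveI : IsProbabilityMeasure (volume : Measure (Fin d → ℝ)) := by
    rw [← hμ]
    show IsProbabilityMeasure (Measure.pi fun _ : Fin d => gaussianReal 0 (d : NNReal)⁻¹)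
    infer_instance
  have hprod : ∀ x : Fin d → ℝ,
      Real.exp (t * ∑ i, x i ^ 2) = ∏ i, Real.exp (t * x i ^ 2) := by
    intro x
    rw [← Real.exp_sum, Finset.mul_sum]
  have hXint : Integrable (fun x : Fin d → ℝ => Real.exp (t * ∑ i, x i ^ 2)) volume := by
    simp_rw [hprod]
    exact Integrable.fintype_prod (f := fun _ : Fin d => fun y : ℝ => Real.exp (t * y ^ 2))
      (fun i => hint1)
  have hmgf : mgf (fun x : Fin d → ℝ => ∑ i, x i ^ 2) volume t
      = ((Real.sqrt (1 - 2 * t * v))⁻¹) ^ d := by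
    rw [mgf]
    simp_rw [hprod]
    rw [volume_pi, MeasureTheory.integral_fintype_prod_eq_pow (μ := (volume : Measure ℝ))
      (fun y : ℝ => Real.exp (t * y ^ 2))]
    have hI1' : (∫ x : ℝ, Real.exp (t * x ^ 2)) = (Real.sqrt (1 - 2 * t * v))⁻¹ := hI1
    rw [hI1', Fintype.card_fin]
  set a := 1 + 2 * w + 2 * L / d with ha_def
  have chernoff := measure_ge_le_exp_mul_mgf
    (X := fun x : Fin d → ℝ => ∑ i, x i ^ 2) (μ := volume) a ht0.le hXint
  rw [hmgf] at chernoff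
  -- the numeric bound
  have hnum : Real.exp (-t * a) * ((Real.sqrt (1 - 2 * t * v))⁻¹) ^ d ≤ δ := by
    have h1s : 1 - 2 * t * (v:ℝ) = (1 + 2 * w)⁻¹ := by
      rw [h2tv, hs_def]; field_simp; ring
    rw [h1s, Real.sqrt_inv, inv_inv]
    have hsq12 : (0:ℝ) < Real.sqrt (1 + 2 * w) := Real.sqrt_pos.mpr h12w
    have hpow : (Real.sqrt (1 + 2 * w)) ^ d = Real.exp (d * (Real.log (1 + 2 * w) / 2)) := by
      rw [← Real.log_sqrt h12w.le, Real.exp_nat_mul, Real.exp_log hsq12]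
    rw [hpow, ← Real.exp_add]
    have hδe : δ = Real.exp (-L) := by
      rw [hL_def, one_div, Real.log_inv, neg_neg, Real.exp_log hδ0]
    rw [hδe, Real.exp_le_exp]
    -- reduce to the log inequality
    have hlog := log_le_key (y := 2 * w) (by linarith)
    have ha2 : 2 * L / d = 2 * w ^ 2 := by rw [hLw]; field_simp
    have hkey : (d:ℝ) / 2 * (2 * w * (2 + 2 * w) / (2 * (1 + 2 * w)))
        = t * a - L := by
      rw [ht_def, hs_def, ha_def, ha2, hLw]
      field_simp
      ring
    have hmul := mul_le_mul_of_nonneg_left hlog (by positivity : (0:ℝ) ≤ (d:ℝ) / 2)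
    rw [hkey] at hmul
    nlinarith [hmul]
  have hsub : (isoGaussian d)
      {x | 1 + 2 * Real.sqrt (Real.log (1 / δ) / d) + 2 * Real.log (1 / δ) / d < ∑ i, x i ^ 2}
      ≤ volume {x : Fin d → ℝ | a ≤ ∑ i, x i ^ 2} := by
    rw [hμ]
    exact measure_mono (Set.setOf_subset_setOf.mpr fun x hx => hx.le)
  refine hsub.trans ?_
  have hfin : volume {x : Fin d → ℝ | a ≤ ∑ i, x i ^ 2} ≠ ⊤ := measure_ne_top _ _
  rw [← ENNReal.ofReal_toReal hfin]
  exact ENNReal.ofReal_le_ofReal (chernoff.trans hnum)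
end

section
/- Let d ≥ 1 and let G = (G_1, …, G_d) be a random vector with independent coordinates, each Gaussian with mean 0 and variance 1/d. For every δ ∈ (0, 1), the probability that ‖G‖² = Σ_{i=1}^d G_i² is at most 1 − 2√(ln(1/δ)/d) is at most δ. -/
open MeasureTheory ProbabilityTheory

lemma log_one_add_ge {u : ℝ} (hu : 0 ≤ u) : u - u ^ 2 / 2 ≤ Real.log (1 + u) := by
  have hder : ∀ x : ℝ, 0 < x → HasDerivAt (fun u : ℝ => Real.log (1 + u) - (u - u ^ 2 / 2))
      ((1 + x)⁻¹ - (1 - x)) x := by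
    intro x hx0
    have h1x : (0:ℝ) < 1 + x := by linarith
    have h1 : HasDerivAt (fun u : ℝ => Real.log (1 + u)) ((1+x)⁻¹) x := by
      have := (Real.hasDerivAt_log h1x.ne').comp x ((hasDerivAt_id x).const_add 1)
      simpa [Function.comp_def] using this
    have h2 : HasDerivAt (fun u : ℝ => u - u ^ 2 / 2) (1 - x) x := by
      have := ((hasDerivAt_id x).sub (((hasDerivAt_pow 2 x)).div_const 2))
      simpa [Pi.sub_def] using this
    exact h1.sub h2
  have key : MonotoneOn (fun u : ℝ => Real.log (1 + u) - (u - u ^ 2 / 2)) (Set.Ici 0) := by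
    apply monotoneOn_of_deriv_nonneg (convex_Ici 0)
    · apply ContinuousOn.sub
      · exact (Real.continuousOn_log.comp (by fun_prop)
          (fun x hx => by simp at hx ⊢; positivity))
      · fun_prop
    · intro x hx
      rw [interior_Ici] at hx
      exact (hder x hx).differentiableAt.differentiableWithinAt
    · intro x hx
      rw [interior_Ici] at hx
      have hx0 : (0:ℝ) < x := hx
      have h1x : (0:ℝ) < 1 + x := by linarith
      rw [(hder x hx0).deriv, sub_nonneg]
      rw [inv_eq_one_div, le_div_iff₀ h1x]
      nlinarith
  have := key (Set.self_mem_Ici (a := (0:ℝ))) hu hu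
  simp at this
  linarith

lemma gauss_sq_integral (d : ℕ) (hd : 1 ≤ d) (l : ℝ) (hl : 0 ≤ l) :
    ∫ x, Real.exp (-l * x ^ 2) ∂(gaussianReal 0 (d : NNReal)⁻¹) =
      (Real.sqrt (1 + 2 * l / d))⁻¹ := by
  have hd0 : (0:ℝ) < d := by exact_mod_cast hd
  have hv : ((d : NNReal)⁻¹ : NNReal) ≠ 0 := by
    simp only [ne_eq, inv_eq_zero, Nat.cast_eq_zero]
    omega
  set v : NNReal := (d : NNReal)⁻¹ with hvdef
  have hvr : (v : ℝ) = (d : ℝ)⁻¹ := by simp [hvdef]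
  have hvpos : (0:ℝ) < (v:ℝ) := by rw [hvr]; positivity
  rw [gaussianReal_of_var_ne_zero _ hv]
  have hpdf : gaussianPDF 0 v = fun x => ((gaussianPDFReal 0 v x).toNNReal : ENNReal) := rfl
  rw [hpdf, integral_withDensity_eq_integral_smul
    ((measurable_gaussianPDFReal 0 v).real_toNNReal)]
  have hb : (0:ℝ) < (2 * (v:ℝ))⁻¹ + l := by positivity
  set b : ℝ := (2 * (v:ℝ))⁻¹ + l with hbdef
  have heq : ∀ x : ℝ, (gaussianPDFReal 0 v x).toNNReal • Real.exp (-l * x ^ 2)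
      = (Real.sqrt (2 * Real.pi * v))⁻¹ * Real.exp (-b * x ^ 2) := by
    intro x
    rw [NNReal.smul_def, smul_eq_mul, Real.coe_toNNReal _ (gaussianPDFReal_nonneg 0 v x)]
    rw [gaussianPDFReal]
    rw [mul_assoc, ← Real.exp_add]
    congr 2
    have hvne : (v:ℝ) ≠ 0 := hvpos.ne'
    rw [hbdef]
    field_simp
    ring
  simp_rw [heq]
  rw [integral_const_mul, integral_gaussian]
  have hπ : (0:ℝ) < Real.pi := Real.pi_pos
  rw [← Real.sqrt_inv, ← Real.sqrt_mul (by positivity)]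
  rw [← Real.sqrt_inv]
  congr 1
  rw [hbdef, hvr]
  field_simp

lemma mgf_sum (d : ℕ) (hd : 1 ≤ d) (l : ℝ) (hl : 0 ≤ l) :
    ∫ x, Real.exp (-l * ∑ i, x i ^ 2) ∂(isoGaussian d) =
      ((Real.sqrt (1 + 2 * l / d))⁻¹) ^ d := by
  letI : MeasureSpace ℝ := ⟨gaussianReal 0 (d : NNReal)⁻¹⟩
  haveI : SigmaFinite (volume : Measure ℝ) :=
    inferInstanceAs (SigmaFinite (gaussianReal 0 (d : NNReal)⁻¹))
  have h : isoGaussian d = (volume : Measure (Fin d → ℝ)) := by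
    rw [isoGaussian, volume_pi]
    rfl
  rw [h]
  have hx : ∀ x : Fin d → ℝ, Real.exp (-l * ∑ i, x i ^ 2)
      = ∏ i, Real.exp (-l * x i ^ 2) := by
    intro x
    rw [← Real.exp_sum, ← Finset.mul_sum]
  simp_rw [hx]
  rw [volume_pi, integral_fintype_prod_eq_pow (ι := Fin d) (fun x : ℝ => Real.exp (-l * x ^ 2))]
  rw [show (volume : Measure ℝ) = gaussianReal 0 (d : NNReal)⁻¹ from rfl]
  rw [gauss_sq_integral d hd l hl, Fintype.card_fin]

/-- lower chi-square tail bound: the probability that `‖G‖²` is at most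
`1 - 2√(ln(1/δ)/d)` is at most `δ`. -/
theorem gaussian_norm_lower_tail (d : ℕ) (hd : 1 ≤ d) (δ : ℝ) (hδ0 : 0 < δ) (hδ1 : δ < 1) :
    isoGaussian d
      {x | ∑ i, x i ^ 2 ≤ 1 - 2 * Real.sqrt (Real.log (1 / δ) / d)} ≤ ENNReal.ofReal δ := by
  have hd0 : (0:ℝ) < d := by exact_mod_cast hd
  haveI : IsProbabilityMeasure (isoGaussian d) := by
    unfold isoGaussian; infer_instance
  set L : ℝ := Real.log (1 / δ) with hLdef
  have hL0 : 0 ≤ L := Real.log_nonneg (by rw [le_div_iff₀ hδ0]; linarith)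
  set t : ℝ := 2 * Real.sqrt (L / d) with htdef
  have ht0 : 0 ≤ t := by positivity
  have ht2 : t ^ 2 = 4 * (L / d) := by
    rw [htdef, mul_pow, Real.sq_sqrt (by positivity)]
    ring
  set l : ℝ := t * d / 2 with hldef
  have hl0 : 0 ≤ l := by positivity
  set X : (Fin d → ℝ) → ℝ := fun x => ∑ i, x i ^ 2 with hXdef
  have hXmeas : Measurable X := by
    apply Finset.measurable_sum
    intro i _
    exact (measurable_pi_apply i).pow_const 2
  have h_int : Integrable (fun x => Real.exp (-l * X x)) (isoGaussian d) := by
    refine Integrable.mono' (integrable_const 1)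
      ((hXmeas.const_mul (-l)).exp.aestronglyMeasurable) (ae_of_all _ fun x => ?_)
    rw [Real.norm_eq_abs, Real.abs_exp, Real.exp_le_one_iff]
    have hX0 : 0 ≤ X x := Finset.sum_nonneg fun i _ => sq_nonneg _
    nlinarith
  have hcher := measure_le_le_exp_mul_mgf (X := X) (μ := isoGaussian d) (1 - t)
    (neg_nonpos.mpr hl0) h_int
  have hmgf : mgf X (isoGaussian d) (-l) = ((Real.sqrt (1 + 2 * l / d))⁻¹) ^ d := by
    rw [mgf]
    exact mgf_sum d hd l hl0
  rw [hmgf, neg_neg] at hcher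
  -- analytic bound
  have htd : 2 * l / d = t := by rw [hldef]; field_simp
  have h1t : (0:ℝ) < 1 + t := by linarith
  have hs : (0:ℝ) < Real.sqrt (1 + 2 * l / d) := by
    rw [htd]; exact Real.sqrt_pos.mpr h1t
  have hR : Real.exp (l * (1 - t)) * ((Real.sqrt (1 + 2 * l / d))⁻¹) ^ d ≤ δ := by
    have hRpos : (0:ℝ) < Real.exp (l * (1 - t)) * ((Real.sqrt (1 + 2 * l / d))⁻¹) ^ d := by
      positivity
    rw [← Real.exp_log hRpos, ← Real.exp_log hδ0, Real.exp_le_exp]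
    rw [Real.log_mul (Real.exp_pos _).ne' (by positivity), Real.log_exp, Real.log_pow,
      htd, Real.log_inv, Real.log_sqrt h1t.le]
    have hlog := log_one_add_ge ht0
    have hlogδ : Real.log δ = -L := by
      rw [hLdef, one_div, Real.log_inv]
      ring
    rw [hlogδ]
    have hl' : l = t * d / 2 := hldef
    have hLd : t ^ 2 * d = 4 * L := by
      rw [ht2]; field_simp
    nlinarith [mul_le_mul_of_nonneg_left hlog (by positivity : (0:ℝ) ≤ (d:ℝ) / 2)]
  calc isoGaussian d {x | ∑ i, x i ^ 2 ≤ 1 - 2 * Real.sqrt (Real.log (1 / δ) / d)}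
      = ENNReal.ofReal ((isoGaussian d {x | X x ≤ 1 - t}).toReal) := by
        rw [ENNReal.ofReal_toReal (measure_ne_top _ _)]
    _ ≤ ENNReal.ofReal δ := by
        apply ENNReal.ofReal_le_ofReal
        exact hcher.trans hR
end

section
/- Let d ≥ 1, let G = (G_1, …, G_d) be a random vector with independent coordinates, each Gaussian with mean 0 and variance 1/d, and let v ∈ ℝ^d be a nonzero vector. For every δ ∈ (0, 1), the probability that ⟨v, G⟩² = (Σ_{i=1}^d v_i G_i)² is at most (‖v‖²/d)·(1 − 2√(ln(1/δ))) is at most δ. -/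
open MeasureTheory ProbabilityTheory

namespace GaussianTailAux
open Real

lemma conv_pdf (v₁ v₂ : NNReal) (h₁ : v₁ ≠ 0) (h₂ : v₂ ≠ 0) (t : ℝ) :
    ∫ x, gaussianPDFReal 0 v₁ x * gaussianPDFReal 0 v₂ (t - x)
      = gaussianPDFReal 0 (v₁ + v₂) t := by
  have hp : (0:ℝ) < v₁ := lt_of_le_of_ne v₁.2 (by exact_mod_cast (Ne.symm h₁))
  have hq : (0:ℝ) < v₂ := lt_of_le_of_ne v₂.2 (by exact_mod_cast (Ne.symm h₂))
  have hpq : (0:ℝ) < (v₁:ℝ) + v₂ := by positivity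
  have hb0 : (0:ℝ) < ((v₁:ℝ) + v₂) / (2 * v₁ * v₂) := by positivity
  have key : ∀ x : ℝ, gaussianPDFReal 0 v₁ x * gaussianPDFReal 0 v₂ (t - x)
      = ((Real.sqrt (2 * π * v₁))⁻¹ * (Real.sqrt (2 * π * v₂))⁻¹
          * Real.exp (- t ^ 2 / (2 * ((v₁:ℝ) + v₂))))
        * Real.exp (-(((v₁:ℝ) + v₂) / (2 * v₁ * v₂))
            * (x - (v₁:ℝ) * t / ((v₁:ℝ) + v₂)) ^ 2) := by
    intro x
    have expo : -x ^ 2 / (2 * (v₁:ℝ)) + -(t - x) ^ 2 / (2 * (v₂:ℝ))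
        = - t ^ 2 / (2 * ((v₁:ℝ) + v₂))
          + (-(((v₁:ℝ) + v₂) / (2 * v₁ * v₂)) * (x - (v₁:ℝ) * t / ((v₁:ℝ) + v₂)) ^ 2) := by
      field_simp
      ring
    simp only [gaussianPDFReal, sub_zero]
    rw [mul_mul_mul_comm, ← Real.exp_add, expo, Real.exp_add]
    ring
  rw [integral_congr_ae (ae_of_all _ key), MeasureTheory.integral_const_mul]
  rw [show (fun x => Real.exp (-(((v₁:ℝ) + v₂) / (2 * v₁ * v₂))
        * (x - (v₁:ℝ) * t / ((v₁:ℝ) + v₂)) ^ 2))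
      = fun x => (fun y => Real.exp (-(((v₁:ℝ) + v₂) / (2 * v₁ * v₂)) * y ^ 2))
          (x - (v₁:ℝ) * t / ((v₁:ℝ) + v₂)) from rfl]
  rw [integral_sub_right_eq_self (fun y => Real.exp (-(((v₁:ℝ) + v₂) / (2 * v₁ * v₂)) * y ^ 2))
      ((v₁:ℝ) * t / ((v₁:ℝ) + v₂)), integral_gaussian]
  simp only [gaussianPDFReal, sub_zero]
  have h1 : π / (((v₁:ℝ) + v₂) / (2 * v₁ * v₂))
      = 2 * π * v₁ * (2 * π * v₂) / (2 * π * ((v₁:ℝ) + v₂)) := by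
    field_simp
  have h2 : Real.sqrt (π / (((v₁:ℝ) + v₂) / (2 * v₁ * v₂)))
      = Real.sqrt (2*π*v₁) * Real.sqrt (2*π*v₂) / Real.sqrt (2*π*((v₁:ℝ)+v₂)) := by
    rw [h1, Real.sqrt_div (by positivity), Real.sqrt_mul (by positivity)]
  have e1 : (0:ℝ) < Real.sqrt (2*π*v₁) := Real.sqrt_pos.2 (by positivity)
  have e2 : (0:ℝ) < Real.sqrt (2*π*v₂) := Real.sqrt_pos.2 (by positivity)
  have e3 : (0:ℝ) < Real.sqrt (2*π*((v₁:ℝ)+v₂)) := Real.sqrt_pos.2 (by positivity)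
  rw [h2, show ((v₁ + v₂ : NNReal) : ℝ) = (v₁:ℝ) + v₂ by push_cast; ring]
  field_simp

lemma gaussianPDFReal_le (v : NNReal) (x : ℝ) :
    gaussianPDFReal 0 v x ≤ (Real.sqrt (2 * π * v))⁻¹ := by
  rw [gaussianPDFReal]
  have h1 : Real.exp (-(x - 0) ^ 2 / (2 * v)) ≤ 1 := by
    rw [Real.exp_le_one_iff]
    apply div_nonpos_of_nonpos_of_nonneg
    · simp [sq_nonneg]
    · positivity
  calc (Real.sqrt (2 * π * v))⁻¹ * Real.exp (-(x - 0) ^ 2 / (2 * v))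
      ≤ (Real.sqrt (2 * π * v))⁻¹ * 1 := by
        apply mul_le_mul_of_nonneg_left h1 (by positivity)
    _ = _ := mul_one _


lemma integrable_conv (v₁ v₂ : NNReal) (t : ℝ) :
    Integrable (fun x => gaussianPDFReal 0 v₁ x * gaussianPDFReal 0 v₂ (t - x)) := by
  have h : Integrable (fun x => gaussianPDFReal 0 v₂ (t - x) * gaussianPDFReal 0 v₁ x) := by
    apply Integrable.bdd_mul (integrable_gaussianPDFReal 0 v₁)
    · exact ((measurable_gaussianPDFReal 0 v₂).comp (measurable_const.sub measurable_id)).aestronglyMeasurable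
    · refine ae_of_all _ fun x => ?_
      rw [Real.norm_eq_abs, abs_of_nonneg (gaussianPDFReal_nonneg _ _ _)]
      exact gaussianPDFReal_le v₂ (t - x)
  exact h.congr (ae_of_all _ fun x => mul_comm _ _)


lemma gaussian_map_add (v₁ v₂ : NNReal) :
    ((gaussianReal 0 v₁).prod (gaussianReal 0 v₂)).map (fun p : ℝ × ℝ => p.1 + p.2)
      = gaussianReal 0 (v₁ + v₂) := by
  by_cases h₁ : v₁ = 0
  · subst h₁
    rw [gaussianReal_zero_var, Measure.dirac_prod, Measure.map_map (by fun_prop) (by fun_prop)]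
    simp [Function.comp_def, zero_add, Measure.map_id']
  by_cases h₂ : v₂ = 0
  · subst h₂
    rw [gaussianReal_zero_var, Measure.prod_dirac, Measure.map_map (by fun_prop) (by fun_prop)]
    simp [Function.comp_def, add_zero, Measure.map_id']
  -- both nonzero
  ext s hs
  rw [Measure.map_apply (by fun_prop) hs,
    Measure.prod_apply (measurable_add hs : MeasurableSet ((fun p : ℝ × ℝ => p.1 + p.2) ⁻¹' s))]
  have step1 : ∀ x : ℝ, gaussianReal 0 v₂ (Prod.mk x ⁻¹' ((fun p : ℝ × ℝ => p.1 + p.2) ⁻¹' s))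
      = ∫⁻ t in s, gaussianPDF 0 v₂ (t - x) := by
    intro x
    have h : (Prod.mk x ⁻¹' ((fun p : ℝ × ℝ => p.1 + p.2) ⁻¹' s)) = (fun y => x + y) ⁻¹' s := rfl
    rw [h, ← Measure.map_apply (by fun_prop) hs, gaussianReal_map_const_add,
      zero_add, gaussianReal_apply _ h₂]
    refine setLIntegral_congr_fun hs (fun t _ => ?_)
    unfold gaussianPDF
    rw [gaussianPDFReal_sub, zero_add]
  simp_rw [step1]
  have hm2 : Measurable (Function.uncurry fun x t : ℝ => gaussianPDF 0 v₂ (t - x)) :=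
    (measurable_gaussianPDF 0 v₂).comp (measurable_snd.sub measurable_fst)
  have hmeasInt : Measurable (fun x : ℝ => ∫⁻ t in s, gaussianPDF 0 v₂ (t - x)) :=
    hm2.lintegral_prod_right'
  rw [gaussianReal_of_var_ne_zero _ h₁,
    lintegral_withDensity_eq_lintegral_mul _ (measurable_gaussianPDF 0 v₁) hmeasInt]
  simp only [Pi.mul_apply]
  have step2 : ∀ x : ℝ, gaussianPDF 0 v₁ x * ∫⁻ t in s, gaussianPDF 0 v₂ (t - x)
      = ∫⁻ t in s, gaussianPDF 0 v₁ x * gaussianPDF 0 v₂ (t - x) := fun x =>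
    (lintegral_const_mul _ ((measurable_gaussianPDF 0 v₂).comp (measurable_id.sub measurable_const))).symm
  simp_rw [step2]
  rw [lintegral_lintegral_swap]
  · have inner : ∀ t : ℝ, ∫⁻ x, gaussianPDF 0 v₁ x * gaussianPDF 0 v₂ (t - x)
        = gaussianPDF 0 (v₁ + v₂) t := by
      intro t
      have hnn : 0 ≤ᶠ[ae volume] fun x => gaussianPDFReal 0 v₁ x * gaussianPDFReal 0 v₂ (t - x) :=
        ae_of_all _ fun x => mul_nonneg (gaussianPDFReal_nonneg _ _ _) (gaussianPDFReal_nonneg _ _ _)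
      have := ofReal_integral_eq_lintegral_ofReal (integrable_conv v₁ v₂ t) hnn
      rw [conv_pdf v₁ v₂ h₁ h₂ t] at this
      unfold gaussianPDF
      calc ∫⁻ x, ENNReal.ofReal (gaussianPDFReal 0 v₁ x) * ENNReal.ofReal (gaussianPDFReal 0 v₂ (t - x))
          = ∫⁻ x, ENNReal.ofReal (gaussianPDFReal 0 v₁ x * gaussianPDFReal 0 v₂ (t - x)) :=
            lintegral_congr fun x => (ENNReal.ofReal_mul (gaussianPDFReal_nonneg _ _ _)).symm
        _ = ENNReal.ofReal (gaussianPDFReal 0 (v₁ + v₂) t) := this.symm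
    simp_rw [inner]
    rw [gaussianReal_apply _ (by simp [h₁]) s]
  · exact ((measurable_gaussianPDF 0 v₁).comp measurable_fst |>.mul
      ((measurable_gaussianPDF 0 v₂).comp (measurable_snd.sub measurable_fst))).aemeasurable

lemma gaussian_map_sum (n : ℕ) (u : NNReal) (w : Fin n → ℝ) :
    (Measure.pi fun _ : Fin n => gaussianReal 0 u).map (fun x => ∑ i, w i * x i)
      = gaussianReal 0 (∑ i, ((w i)^2).toNNReal * u) := by
  induction n with
  | zero =>
      simp only [Finset.univ_eq_empty, Finset.sum_empty]
      rw [show (fun x : Fin 0 → ℝ => (0:ℝ)) = fun _ => (0:ℝ) from rfl, Measure.map_const]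
      simp [gaussianReal_zero_var]
  | succ n ih =>
      have hmp := measurePreserving_piFinSuccAbove (fun _ : Fin (n+1) => gaussianReal 0 u) 0
      set e := MeasurableEquiv.piFinSuccAbove (fun _ : Fin (n+1) => ℝ) 0 with he
      have hcomp : (fun x : Fin (n+1) → ℝ => ∑ i, w i * x i)
          = (fun p : ℝ × (Fin n → ℝ) => w 0 * p.1 + ∑ i, w i.succ * p.2 i) ∘ e := by
        funext x
        simp only [Function.comp_apply, he, MeasurableEquiv.piFinSuccAbove,
          MeasurableEquiv.coe_mk, Fin.insertNthEquiv]
        rw [Fin.sum_univ_succ]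
        simp [Fin.succAbove_zero, Fin.tail]
      rw [hcomp, ← Measure.map_map (by fun_prop) e.measurable, hmp.map_eq]
      have hsplit : (fun p : ℝ × (Fin n → ℝ) => w 0 * p.1 + ∑ i, w i.succ * p.2 i)
          = (fun p : ℝ × ℝ => p.1 + p.2) ∘
              (Prod.map (fun y : ℝ => w 0 * y) (fun z : Fin n → ℝ => ∑ i, w i.succ * z i)) := rfl
      rw [hsplit, ← Measure.map_map (by fun_prop) (by fun_prop),
        ← Measure.map_prod_map _ _ (by fun_prop) (by fun_prop)]
      rw [show (fun y : ℝ => w 0 * y) = (fun y => w 0 * y) from rfl]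
      rw [show Measure.map (fun y => w 0 * y) (gaussianReal 0 u) = gaussianReal (w 0 * 0) (⟨(w 0)^2, sq_nonneg _⟩ * u) from gaussianReal_map_const_mul (w 0)]
      rw [ih, mul_zero, gaussian_map_add]
      congr 1
      rw [Fin.sum_univ_succ]
      congr 1
      apply NNReal.coe_injective
      simp [Real.coe_toNNReal _ (sq_nonneg (w 0))]
      rfl

lemma gaussian_sq_tail (V : NNReal) (hV : V ≠ 0) (δ : ℝ) (hδ0 : 0 < δ) (hδ1 : δ < 1) :
    gaussianReal 0 V {y : ℝ | y ^ 2 ≤ (V:ℝ) * (1 - 2 * Real.sqrt (Real.log (1 / δ)))}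
      ≤ ENNReal.ofReal δ := by
  have hVpos : (0:ℝ) < V := lt_of_le_of_ne V.2 (by exact_mod_cast (Ne.symm hV))
  set t : ℝ := Real.log (1 / δ) with htdef
  have ht0 : 0 < t := Real.log_pos (by rw [lt_div_iff₀ hδ0]; linarith)
  set c : ℝ := 1 - 2 * Real.sqrt t with hcdef
  set a : ℝ := Real.sqrt ((V:ℝ) * max c 0) with hadef
  have ha0 : 0 ≤ a := Real.sqrt_nonneg _
  -- subset of Icc
  have hsub : {y : ℝ | y ^ 2 ≤ (V:ℝ) * c} ⊆ Set.Icc (-a) a := by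
    intro y hy
    simp only [Set.mem_setOf_eq] at hy
    have h1 : y ^ 2 ≤ a ^ 2 := by
      rw [hadef, Real.sq_sqrt (by positivity)]
      exact hy.trans (mul_le_mul_of_nonneg_left (le_max_left c 0) (by positivity))
    have h2 : |y| ≤ a := by
      have := Real.sqrt_le_sqrt h1
      rwa [Real.sqrt_sq_eq_abs, Real.sqrt_sq ha0] at this
    exact abs_le.1 h2
  refine le_trans (measure_mono hsub) ?_
  rw [gaussianReal_apply_eq_integral _ hV]
  -- bound the integral
  have hbound : ∫ x in Set.Icc (-a) a, gaussianPDFReal 0 V x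
      ≤ 2 * a * (Real.sqrt (2 * π * V))⁻¹ := by
    have h1 : ∫ x in Set.Icc (-a) a, gaussianPDFReal 0 V x
        ≤ ∫ _ in Set.Icc (-a) a, (Real.sqrt (2 * π * V))⁻¹ := by
      refine setIntegral_mono_on (integrable_gaussianPDFReal 0 V).integrableOn
        (integrableOn_const (by rw [Real.volume_Icc]; exact ENNReal.ofReal_ne_top))
        measurableSet_Icc (fun x _ => gaussianPDFReal_le V x)
    refine h1.trans ?_
    rw [setIntegral_const, Real.volume_real_Icc, smul_eq_mul, max_eq_left (by linarith)]
    apply le_of_eq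
    ring
  refine le_trans (ENNReal.ofReal_le_ofReal hbound) (ENNReal.ofReal_le_ofReal ?_)
  -- arithmetic
  by_cases hc : c ≤ 0
  · have : a = 0 := by rw [hadef, max_eq_right hc, mul_zero, Real.sqrt_zero]
    rw [this]
    simp
    positivity
  push_neg at hc
  have hmax : max c 0 = c := max_eq_left hc.le
  have hsqrtV : (0:ℝ) < Real.sqrt V := Real.sqrt_pos.2 hVpos
  have hsqrt2pi : (0:ℝ) < Real.sqrt (2 * π) := Real.sqrt_pos.2 (by positivity)
  have haeq : a = Real.sqrt V * Real.sqrt c := by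
    rw [hadef, hmax, Real.sqrt_mul (by positivity)]
  have h2pi : Real.sqrt (2 * π * V) = Real.sqrt (2 * π) * Real.sqrt V := by
    rw [Real.sqrt_mul (by positivity)]
  rw [haeq, h2pi]
  have heq : 2 * (Real.sqrt V * Real.sqrt c) * (Real.sqrt (2 * π) * Real.sqrt V)⁻¹
      = 2 * Real.sqrt c / Real.sqrt (2 * π) := by
    field_simp
  rw [heq, div_le_iff₀ hsqrt2pi]
  -- now 2 √c ≤ δ √(2π)
  have hst : Real.sqrt t < 1/2 := by nlinarith [Real.sqrt_nonneg t]
  have hst0 : 0 ≤ Real.sqrt t := Real.sqrt_nonneg t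
  have ht14 : t < 1/4 := by
    have := Real.sq_sqrt ht0.le
    nlinarith
  have hδt : δ = Real.exp (-t) := by
    rw [htdef, one_div, Real.log_inv, neg_neg, Real.exp_log hδ0]
  have h1 : Real.sqrt c ≤ 1 - Real.sqrt t := by
    have hle : c ≤ (1 - Real.sqrt t) ^ 2 := by
      have := Real.sq_sqrt ht0.le
      nlinarith
    calc Real.sqrt c ≤ Real.sqrt ((1 - Real.sqrt t) ^ 2) := Real.sqrt_le_sqrt hle
      _ = |1 - Real.sqrt t| := Real.sqrt_sq_eq_abs _
      _ = 1 - Real.sqrt t := abs_of_nonneg (by linarith)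
  have h2 : (1:ℝ) - t ≤ Real.exp (-t) := by
    have := Real.add_one_le_exp (-t)
    linarith
  have h3 : (2:ℝ) ≤ Real.sqrt (2 * π) := by
    have h4 : Real.sqrt 4 ≤ Real.sqrt (2 * π) := Real.sqrt_le_sqrt (by nlinarith [Real.pi_gt_three])
    rwa [show (4:ℝ) = 2 ^ 2 by norm_num, Real.sqrt_sq (by norm_num : (0:ℝ) ≤ 2)] at h4
  have key : 2 * (1 - Real.sqrt t) ≤ (1 - t) * Real.sqrt (2 * π) := by
    have hsq : Real.sqrt t * Real.sqrt t = t := Real.mul_self_sqrt ht0.le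
    nlinarith
  calc 2 * Real.sqrt c ≤ 2 * (1 - Real.sqrt t) := by linarith
    _ ≤ (1 - t) * Real.sqrt (2 * π) := key
    _ ≤ Real.exp (-t) * Real.sqrt (2 * π) := by nlinarith
    _ = δ * Real.sqrt (2 * π) := by rw [hδt]

end GaussianTailAux

/-- lower tail of `⟨v, G⟩²`: the probability that `(∑ i, v i * G i)²` is at most
`(‖v‖²/d)·(1 - 2√(ln(1/δ)))` is at most `δ`. -/
theorem gaussian_inner_lower_tail (d : ℕ) (hd : 1 ≤ d)
    (v : EuclideanSpace ℝ (Fin d)) (hv : v ≠ 0)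
    (δ : ℝ) (hδ0 : 0 < δ) (hδ1 : δ < 1) :
    isoGaussian d
      {x | (∑ i, v i * x i) ^ 2 ≤ (‖v‖ ^ 2 / d) * (1 - 2 * Real.sqrt (Real.log (1 / δ)))}
      ≤ ENNReal.ofReal δ := by
  classical
  set V : NNReal := ∑ i, ((v i) ^ 2).toNNReal * (d : NNReal)⁻¹ with hVdef
  have hd0 : (0:ℝ) < d := by exact_mod_cast hd
  have hnorm : ‖v‖ ^ 2 = ∑ i, (v i) ^ 2 := by
    rw [EuclideanSpace.norm_eq, Real.sq_sqrt (by positivity)]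
    exact Finset.sum_congr rfl fun i _ => by rw [Real.norm_eq_abs, sq_abs]
  have hVr : (V : ℝ) = ‖v‖ ^ 2 / d := by
    rw [hnorm, hVdef]
    push_cast
    rw [Finset.sum_div]
    refine Finset.sum_congr rfl fun i _ => ?_
    rw [Real.coe_toNNReal _ (sq_nonneg _), div_eq_mul_inv]
  have hnv : (0:ℝ) < ‖v‖ := norm_pos_iff.2 hv
  have hV0 : V ≠ 0 := by
    intro h
    have h1 : (V : ℝ) = 0 := by rw [h]; simp
    have h2 : (0:ℝ) < ‖v‖ ^ 2 / d := by positivity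
    rw [hVr] at h1
    linarith
  have hmeasf : Measurable (fun x : Fin d → ℝ => ∑ i, v i * x i) := by
    apply Finset.measurable_sum
    intro i _
    exact (measurable_pi_apply i).const_mul _
  have hset : MeasurableSet {y : ℝ | y ^ 2
      ≤ (‖v‖ ^ 2 / d) * (1 - 2 * Real.sqrt (Real.log (1 / δ)))} :=
    measurableSet_le (measurable_id.pow_const 2) measurable_const
  have hmap : isoGaussian d
        {x | (∑ i, v i * x i) ^ 2 ≤ (‖v‖ ^ 2 / d) * (1 - 2 * Real.sqrt (Real.log (1 / δ)))}
      = ((isoGaussian d).map (fun x => ∑ i, v i * x i))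
        {y : ℝ | y ^ 2 ≤ (‖v‖ ^ 2 / d) * (1 - 2 * Real.sqrt (Real.log (1 / δ)))} := by
    rw [Measure.map_apply hmeasf hset]
    rfl
  rw [hmap, show (isoGaussian d).map (fun x => ∑ i, v i * x i) = gaussianReal 0 V from
    GaussianTailAux.gaussian_map_sum d (d : NNReal)⁻¹ (fun i => v i), ← hVr]
  exact GaussianTailAux.gaussian_sq_tail V hV0 δ hδ0 hδ1
end
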